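/- Let C be a CTMC, R ⊆ S × S, and s1 R s2 with some s1' ∈ post(s1) satisfying (s1',s2) ∉ R. Then s1 ≾_R s2 in C (weak simulation up to R in the continuous-time sense, including the rate condition K1·R(s1,S) ≤ K2·R(s2,S)) if and only if there exists γ with 0 < γ ≤ R(s2,S)/R(s1,S) such that γ is valid for the parametric network N(γ) built over the embedded DTMC, i.e., some flow on N(γ) saturates all edges 𝓈→u1 (u1 ∈ MU1 = post(s1)\R⁻¹(s2)) and all edges ū2→𝓉 (u2 ∈ MU2 = post(s2)\R(s1)). -/

import Mathlib

open Finset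
open scoped Classical ENNReal

/-- Vertices of the bipartite network `N(μ, μ', R)`: a source `src`, a sink
`snk`, left copies `lft s` of states and right copies `rgt t` of states. -/
abbrev Vert (S : Type*) := (Bool × S) ⊕ Bool

variable {S : Type*} [Fintype S]

def src {S : Type*} : Vert S := Sum.inr false
def snk {S : Type*} : Vert S := Sum.inr true
def lft {S : Type*} (s : S) : Vert S := Sum.inl (false, s)
def rgt {S : Type*} (t : S) : Vert S := Sum.inl (true, t)

/-- Capacities of `N(μ, μ', R)`: `μ(s)` on `src → lft s`, `μ'(t)` on
`rgt t → snk`, infinite capacity on `lft s → rgt t` whenever `(s,t) ∈ R`,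
and `0` (no edge) otherwise. -/
noncomputable def cap (μ μ' : S → ℝ) (R : Set (S × S)) : Vert S → Vert S → ℝ≥0∞ :=
  fun v w =>
    match v, w with
    | Sum.inr false, Sum.inl (false, s) => ENNReal.ofReal (μ s)
    | Sum.inl (true, t), Sum.inr true => ENNReal.ofReal (μ' t)
    | Sum.inl (false, s), Sum.inl (true, t) => if (s, t) ∈ R then ⊤ else 0
    | _, _ => 0

/-- `f` is a flow on the network with capacities `c`: capacity constraints,
antisymmetry, and conservation at every internal vertex. -/
def IsFlow (c : Vert S → Vert S → ℝ≥0∞) (f : Vert S → Vert S → ℝ) : Prop :=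
  (∀ v w, ENNReal.ofReal (f v w) ≤ c v w) ∧
  (∀ v w, f v w = - f w v) ∧
  (∀ v : Vert S, v ≠ src → v ≠ snk → (∑ u, f u v) = 0)

/-- The value of a flow: the net outflow of the source. -/
def flowValue (f : Vert S → Vert S → ℝ) : ℝ := ∑ w, f src w

variable {AP : Type*}

/-- The embedded DTMC of a CTMC with rate matrix `Q`. -/
noncomputable def emb (Q : S → S → ℝ) (s u : S) : ℝ :=
  if 0 < ∑ v, Q s v then Q s u / ∑ v, Q s v else 0

/-- `s₂` weakly simulates `s₁` up to `R` in the CTMC with rate matrix `Q`: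
Conditions (1) and (2) of the DTMC definition for the embedded chain plus the
rate condition `K₁·Q(s₁,S) ≤ K₂·Q(s₂,S)`. -/
def CWeakSimUpTo (Q : S → S → ℝ) (L : S → Set AP) (R : Set (S × S))
    (s₁ s₂ : S) : Prop :=
  L s₁ = L s₂ ∧
  ∃ δ₁ δ₂ : S → ℝ,
    (∀ u, 0 ≤ δ₁ u ∧ δ₁ u ≤ 1) ∧ (∀ u, 0 ≤ δ₂ u ∧ δ₂ u ≤ 1) ∧
    -- (1) stutter steps respect the relation
    (∀ v, 0 < emb Q s₁ v → δ₁ v < 1 → (v, s₂) ∈ R) ∧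
    (∀ v, 0 < emb Q s₂ v → δ₂ v < 1 → (s₁, v) ∈ R) ∧
    -- (2) weight function condition on the visible parts
    (∃ Δ : S → S → ℝ,
      (∀ u v, 0 ≤ Δ u v ∧ Δ u v ≤ 1) ∧
      (∀ u v, 0 < Δ u v →
        (0 < emb Q s₁ u ∧ 0 < δ₁ u) ∧ (0 < emb Q s₂ v ∧ 0 < δ₂ v) ∧ (u, v) ∈ R) ∧
      (0 < (∑ u, δ₁ u * emb Q s₁ u) → 0 < (∑ u, δ₂ u * emb Q s₂ u) →
        ∀ w, (∑ u, δ₁ u * emb Q s₁ u) * (∑ v, Δ w v) = emb Q s₁ w * δ₁ w ∧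
             (∑ u, δ₂ u * emb Q s₂ u) * (∑ v, Δ v w) = emb Q s₂ w * δ₂ w)) ∧
    -- (3') rate condition
    (∑ u, δ₁ u * emb Q s₁ u) * (∑ v, Q s₁ v) ≤
      (∑ u, δ₂ u * emb Q s₂ u) * (∑ v, Q s₂ v)

set_option linter.unusedSectionVars false
set_option maxHeartbeats 1000000

-- ===== AUX =====
-- AUX START
section MyAux

lemma sum_vert (g : Vert S → ℝ) :
    (∑ v, g v) = (∑ s, g (lft s)) + (∑ t, g (rgt t)) + g src + g snk := by
  rw [Fintype.sum_sum_type, Fintype.sum_prod_type, Fintype.sum_bool, Fintype.sum_bool]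
  simp only [lft, rgt, src, snk]; ring

noncomputable def onedir (a : S → ℝ) (B : S → S → ℝ) (c : S → ℝ) : Vert S → Vert S → ℝ :=
  fun v w =>
    match v, w with
    | Sum.inr false, Sum.inl (false, s) => a s
    | Sum.inl (false, s), Sum.inl (true, t) => B s t
    | Sum.inl (true, t), Sum.inr true => c t
    | _, _ => 0

variable {a : S → ℝ} {B : S → S → ℝ} {c : S → ℝ}

@[simp] lemma od1 (s : S) : onedir a B c src (lft s) = a s := rfl
@[simp] lemma od2 (s t : S) : onedir a B c (lft s) (rgt t) = B s t := rfl
@[simp] lemma od3 (t : S) : onedir a B c (rgt t) snk = c t := rfl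
@[simp] lemma od4 (s : S) : onedir a B c (lft s) src = 0 := rfl
@[simp] lemma od5 (s t : S) : onedir a B c (rgt t) (lft s) = 0 := rfl
@[simp] lemma od6 (t : S) : onedir a B c snk (rgt t) = 0 := rfl
@[simp] lemma od7 : onedir a B c (src : Vert S) snk = 0 := rfl
@[simp] lemma od8 : onedir a B c (snk : Vert S) src = 0 := rfl
@[simp] lemma od9 (s s' : S) : onedir a B c (lft s) (lft s') = 0 := rfl
@[simp] lemma od10 (t t' : S) : onedir a B c (rgt t) (rgt t') = 0 := rfl
@[simp] lemma od11 (t : S) : onedir a B c src (rgt t) = 0 := rfl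
@[simp] lemma od12 (t : S) : onedir a B c (rgt t) src = 0 := rfl
@[simp] lemma od13 (s : S) : onedir a B c snk (lft s) = 0 := rfl
@[simp] lemma od14 (s : S) : onedir a B c (lft s) snk = 0 := rfl
@[simp] lemma od15 : onedir a B c (src : Vert S) src = 0 := rfl
@[simp] lemma od16 : onedir a B c (snk : Vert S) snk = 0 := rfl


@[simp] lemma rod1 (s : S) : onedir a B c (Sum.inr false) (Sum.inl (false, s)) = a s := rfl
@[simp] lemma rod2 (s t : S) : onedir a B c (Sum.inl (false, s)) (Sum.inl (true, t)) = B s t := rfl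
@[simp] lemma rod3 (t : S) : onedir a B c (Sum.inl (true, t)) (Sum.inr true) = c t := rfl
@[simp] lemma rod4 (s : S) : onedir a B c (Sum.inl (false, s)) (Sum.inr false) = 0 := rfl
@[simp] lemma rod5 (s t : S) : onedir a B c (Sum.inl (true, t)) (Sum.inl (false, s)) = 0 := rfl
@[simp] lemma rod6 (t : S) : onedir a B c (Sum.inr true) (Sum.inl (true, t)) = 0 := rfl
@[simp] lemma rod7 : onedir a B c (Sum.inr false : Vert S) (Sum.inr true) = 0 := rfl
@[simp] lemma rod8 : onedir a B c (Sum.inr true : Vert S) (Sum.inr false) = 0 := rfl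
@[simp] lemma rod9 (s s' : S) : onedir a B c (Sum.inl (false, s)) (Sum.inl (false, s')) = 0 := rfl
@[simp] lemma rod10 (t t' : S) : onedir a B c (Sum.inl (true, t)) (Sum.inl (true, t')) = 0 := rfl
@[simp] lemma rod11 (t : S) : onedir a B c (Sum.inr false) (Sum.inl (true, t)) = 0 := rfl
@[simp] lemma rod12 (t : S) : onedir a B c (Sum.inl (true, t)) (Sum.inr false) = 0 := rfl
@[simp] lemma rod14 (s : S) : onedir a B c (Sum.inl (false, s)) (Sum.inr true) = 0 := rfl
@[simp] lemma rod13 (s : S) : onedir a B c (Sum.inr true) (Sum.inl (false, s)) = 0 := rfl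
@[simp] lemma rod15 : onedir a B c (Sum.inr false : Vert S) (Sum.inr false) = 0 := rfl
@[simp] lemma rod16 : onedir a B c (Sum.inr true : Vert S) (Sum.inr true) = 0 := rfl

variable {μ μ' : S → ℝ} {R : Set (S × S)}

@[simp] lemma rcp1 (s : S) : cap μ μ' R (Sum.inr false) (Sum.inl (false, s)) = ENNReal.ofReal (μ s) := rfl
@[simp] lemma rcp2 (s t : S) : cap μ μ' R (Sum.inl (false, s)) (Sum.inl (true, t)) = if (s, t) ∈ R then ⊤ else 0 := rfl
@[simp] lemma rcp3 (t : S) : cap μ μ' R (Sum.inl (true, t)) (Sum.inr true) = ENNReal.ofReal (μ' t) := rfl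
@[simp] lemma rcp4 (s : S) : cap μ μ' R (Sum.inl (false, s)) (Sum.inr false) = 0 := rfl
@[simp] lemma rcp5 (s t : S) : cap μ μ' R (Sum.inl (true, t)) (Sum.inl (false, s)) = 0 := rfl
@[simp] lemma rcp6 (t : S) : cap μ μ' R (Sum.inr true) (Sum.inl (true, t)) = 0 := rfl
@[simp] lemma rcp7 : cap μ μ' R (Sum.inr false : Vert S) (Sum.inr true) = 0 := rfl
@[simp] lemma rcp8 : cap μ μ' R (Sum.inr true : Vert S) (Sum.inr false) = 0 := rfl
@[simp] lemma rcp9 (s s' : S) : cap μ μ' R (Sum.inl (false, s)) (Sum.inl (false, s')) = 0 := rfl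
@[simp] lemma rcp10 (t t' : S) : cap μ μ' R (Sum.inl (true, t)) (Sum.inl (true, t')) = 0 := rfl
@[simp] lemma rcp11 (t : S) : cap μ μ' R (Sum.inr false) (Sum.inl (true, t)) = 0 := rfl
@[simp] lemma rcp12 (t : S) : cap μ μ' R (Sum.inl (true, t)) (Sum.inr false) = 0 := rfl
@[simp] lemma rcp14 (s : S) : cap μ μ' R (Sum.inl (false, s)) (Sum.inr true) = 0 := rfl
@[simp] lemma rcp13 (s : S) : cap μ μ' R (Sum.inr true) (Sum.inl (false, s)) = 0 := rfl
@[simp] lemma rcp15 : cap μ μ' R (Sum.inr false : Vert S) (Sum.inr false) = 0 := rfl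
@[simp] lemma rcp16 : cap μ μ' R (Sum.inr true : Vert S) (Sum.inr true) = 0 := rfl


@[simp] lemma cp1 (s : S) : cap μ μ' R src (lft s) = ENNReal.ofReal (μ s) := rfl
@[simp] lemma cp2 (s t : S) : cap μ μ' R (lft s) (rgt t) = if (s, t) ∈ R then ⊤ else 0 := rfl
@[simp] lemma cp3 (t : S) : cap μ μ' R (rgt t) snk = ENNReal.ofReal (μ' t) := rfl
@[simp] lemma cp4 (s : S) : cap μ μ' R (lft s) src = 0 := rfl
@[simp] lemma cp5 (s t : S) : cap μ μ' R (rgt t) (lft s) = 0 := rfl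
@[simp] lemma cp6 (t : S) : cap μ μ' R snk (rgt t) = 0 := rfl
@[simp] lemma cp7 : cap μ μ' R (src : Vert S) snk = 0 := rfl
@[simp] lemma cp8 : cap μ μ' R (snk : Vert S) src = 0 := rfl
@[simp] lemma cp9 (s s' : S) : cap μ μ' R (lft s) (lft s') = 0 := rfl
@[simp] lemma cp10 (t t' : S) : cap μ μ' R (rgt t) (rgt t') = 0 := rfl
@[simp] lemma cp11 (t : S) : cap μ μ' R src (rgt t) = 0 := rfl
@[simp] lemma cp12 (t : S) : cap μ μ' R (rgt t) src = 0 := rfl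
@[simp] lemma cp13 (s : S) : cap μ μ' R snk (lft s) = 0 := rfl
@[simp] lemma cp14 (s : S) : cap μ μ' R (lft s) snk = 0 := rfl
@[simp] lemma cp15 : cap μ μ' R (src : Vert S) src = 0 := rfl
@[simp] lemma cp16 : cap μ μ' R (snk : Vert S) snk = 0 := rfl

lemma emb_nonneg (Q : S → S → ℝ) (hQ0 : ∀ s u, 0 ≤ Q s u) (s u : S) : 0 ≤ emb Q s u := by
  unfold emb; split
  · exact div_nonneg (hQ0 s u) (le_of_lt ‹_›)
  · exact le_refl 0

lemma emb_pos_iff (Q : S → S → ℝ) (hQ0 : ∀ s u, 0 ≤ Q s u) (s u : S) :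
    0 < emb Q s u ↔ 0 < Q s u := by
  constructor
  · intro h
    by_contra hn
    have hz : Q s u = 0 := le_antisymm (not_lt.mp hn) (hQ0 s u)
    unfold emb at h
    split at h
    · rw [hz] at h; simp at h
    · simp at h
  · intro h
    have hE : 0 < ∑ v, Q s v :=
      lt_of_lt_of_le h (Finset.single_le_sum (fun i _ => hQ0 s i) (mem_univ u))
    unfold emb; rw [if_pos hE]; exact div_pos h hE

/-- Generic construction of a flow on the bipartite network from a one-directional
assignment. -/
lemma isFlow_onedir (μ μ' a c : S → ℝ) (B : S → S → ℝ) (R : Set (S × S))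
    (ha0 : ∀ s, 0 ≤ a s) (hB0 : ∀ s t, 0 ≤ B s t) (hc0 : ∀ t, 0 ≤ c t)
    (haμ : ∀ s, a s ≤ μ s) (hcμ : ∀ t, c t ≤ μ' t)
    (hBR : ∀ s t, 0 < B s t → (s, t) ∈ R)
    (hrow : ∀ s, a s = ∑ t, B s t) (hcol : ∀ t, c t = ∑ s, B s t) :
    IsFlow (cap μ μ' R) (fun v w => onedir a B c v w - onedir a B c w v) := by
  refine ⟨?_, ?_, ?_⟩
  · intro v w
    rcases v with ⟨(_|_), s⟩ | (_|_) <;> rcases w with ⟨(_|_), t⟩ | (_|_) <;>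
      simp only [rod1, rod2, rod3, rod4, rod5, rod6, rod7, rod8, rod9, rod10, rod11, rod12, rod13, rod14,
        rod15, rod16, rcp1, rcp2, rcp3, rcp4, rcp5, rcp6, rcp7, rcp8, rcp9, rcp10, rcp11, rcp12, rcp13, rcp14, rcp15, rcp16, sub_zero, zero_sub, sub_self] <;>
      first
        | (simp; done)
        | (exact ENNReal.ofReal_le_ofReal (haμ _))
        | (exact ENNReal.ofReal_le_ofReal (hcμ _))
        | (simp only [nonpos_iff_eq_zero, ENNReal.ofReal_eq_zero, neg_nonpos]
           first
             | exact ha0 _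
             | exact hc0 _
             | exact hB0 _ _)
        | skip
    -- remaining: lft s → rgt t
    by_cases h : (s, t) ∈ R
    · rw [if_pos h]; exact le_top
    · rw [if_neg h]
      have hb : B s t = 0 := by
        by_contra hb
        exact h (hBR s t (lt_of_le_of_ne (hB0 s t) (Ne.symm hb)))
      simp [hb]
  · intro v w; ring
  · rintro (⟨(_|_), s⟩ | (_|_)) hv hw
    · -- lft s
      rw [show (∑ u, ((fun v w => onedir a B c v w - onedir a B c w v) u (Sum.inl (false, s)))) =
        ∑ u : Vert S, (onedir a B c u (lft s) - onedir a B c (lft s) u) from rfl, sum_vert]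
      simp [Finset.sum_sub_distrib, hrow s]
    · -- rgt s
      rw [show (∑ u, ((fun v w => onedir a B c v w - onedir a B c w v) u (Sum.inl (true, s)))) =
        ∑ u : Vert S, (onedir a B c u (rgt s) - onedir a B c (rgt s) u) from rfl, sum_vert]
      simp [Finset.sum_sub_distrib, hcol s]
    · exact absurd rfl hv
    · exact absurd rfl hw


end MyAux

/-- for a CTMC, if `s₁ R s₂` and `s₁` has a visible step, then
`s₁ ≾_R s₂` iff there is `0 < γ ≤ Q(s₂,S)/Q(s₁,S)` valid for the parametric
network `N(γ)` over the embedded DTMC, i.e. some flow on `N(γ)` saturates all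
source edges into `MU1 = post(s₁) \ R⁻¹(s₂)` and all sink edges from
`MU2 = post(s₂) \ R(s₁)`. -/
theorem ctmc_weakSimUpTo_iff_valid_gamma (Q : S → S → ℝ) (L : S → Set AP)
    (hQ0 : ∀ s u, 0 ≤ Q s u)
    (R : Set (S × S)) (s₁ s₂ : S) (hR : (s₁, s₂) ∈ R) (hL : L s₁ = L s₂)
    (hvis₁ : ∃ u, 0 < Q s₁ u ∧ (u, s₂) ∉ R) :
    CWeakSimUpTo Q L R s₁ s₂ ↔
    ∃ γ : ℝ, 0 < γ ∧ γ ≤ (∑ v, Q s₂ v) / (∑ v, Q s₁ v) ∧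
      ∃ f, IsFlow (cap (emb Q s₁) (fun u => γ * emb Q s₂ u) R) f ∧
        (∀ u, 0 < Q s₁ u → (u, s₂) ∉ R → f src (lft u) = emb Q s₁ u) ∧
        (∀ u, 0 < Q s₂ u → (s₁, u) ∉ R → f (rgt u) snk = γ * emb Q s₂ u) := by
  obtain ⟨u₀, hu₀Q, hu₀R⟩ := hvis₁
  have hE₁ : 0 < ∑ v, Q s₁ v :=
    lt_of_lt_of_le hu₀Q (Finset.single_le_sum (fun i _ => hQ0 s₁ i) (mem_univ u₀))
  constructor
  · rintro ⟨-, δ₁, δ₂, hδ₁b, hδ₂b, hst₁, hst₂, ⟨Δ, hΔb, hΔpos, hΔeq⟩, hrate⟩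
    have he₁u₀ : 0 < emb Q s₁ u₀ := (emb_pos_iff Q hQ0 s₁ u₀).mpr hu₀Q
    have hδ₁one : ∀ u, 0 < Q s₁ u → (u, s₂) ∉ R → δ₁ u = 1 := by
      intro u hu hn
      have he : 0 < emb Q s₁ u := (emb_pos_iff Q hQ0 s₁ u).mpr hu
      by_contra h
      exact hn (hst₁ u he (lt_of_le_of_ne (hδ₁b u).2 h))
    have hδ₂one : ∀ u, 0 < Q s₂ u → (s₁, u) ∉ R → δ₂ u = 1 := by
      intro u hu hn
      have he : 0 < emb Q s₂ u := (emb_pos_iff Q hQ0 s₂ u).mpr hu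
      by_contra h
      exact hn (hst₂ u he (lt_of_le_of_ne (hδ₂b u).2 h))
    set K₁ := ∑ u, δ₁ u * emb Q s₁ u with hK₁def
    set K₂ := ∑ u, δ₂ u * emb Q s₂ u with hK₂def
    have hK₁pos : 0 < K₁ := by
      have h1 : δ₁ u₀ * emb Q s₁ u₀ = emb Q s₁ u₀ := by
        rw [hδ₁one u₀ hu₀Q hu₀R, one_mul]
      calc (0:ℝ) < δ₁ u₀ * emb Q s₁ u₀ := by rw [h1]; exact he₁u₀
        _ ≤ K₁ := Finset.single_le_sum
            (fun i _ => mul_nonneg (hδ₁b i).1 (emb_nonneg Q hQ0 s₁ i)) (mem_univ u₀)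
    have hK₂nn : 0 ≤ K₂ :=
      Finset.sum_nonneg fun i _ => mul_nonneg (hδ₂b i).1 (emb_nonneg Q hQ0 s₂ i)
    have hE₂nn : 0 ≤ ∑ v, Q s₂ v := Finset.sum_nonneg fun i _ => hQ0 s₂ i
    have hprod : 0 < K₂ * (∑ v, Q s₂ v) := lt_of_lt_of_le (mul_pos hK₁pos hE₁) hrate
    have hK₂pos : 0 < K₂ := by
      by_contra h; push_neg at h; nlinarith
    have hE₂pos : 0 < ∑ v, Q s₂ v := by
      by_contra h; push_neg at h; nlinarith
    have hΔw := hΔeq hK₁pos hK₂pos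
    have hγpos : 0 < K₁ / K₂ := div_pos hK₁pos hK₂pos
    have hγle : K₁ / K₂ ≤ (∑ v, Q s₂ v) / (∑ v, Q s₁ v) := by
      rw [div_le_div_iff₀ hK₂pos hE₁]
      nlinarith [hrate]
    refine ⟨K₁ / K₂, hγpos, hγle, _,
      isFlow_onedir (emb Q s₁) (fun u => K₁ / K₂ * emb Q s₂ u)
        (fun u => emb Q s₁ u * δ₁ u) (fun v => K₁ / K₂ * (emb Q s₂ v * δ₂ v))
        (fun u v => K₁ * Δ u v) R
        (fun s => mul_nonneg (emb_nonneg Q hQ0 s₁ s) (hδ₁b s).1)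
        (fun s t => mul_nonneg hK₁pos.le (hΔb s t).1)
        (fun t => mul_nonneg hγpos.le
          (mul_nonneg (emb_nonneg Q hQ0 s₂ t) (hδ₂b t).1))
        (fun s => mul_le_of_le_one_right (emb_nonneg Q hQ0 s₁ s) (hδ₁b s).2)
        (fun t => mul_le_mul_of_nonneg_left
          (mul_le_of_le_one_right (emb_nonneg Q hQ0 s₂ t) (hδ₂b t).2) hγpos.le)
        ?_ ?_ ?_, ?_, ?_⟩
    · -- hBR
      intro s t h
      have h' : 0 < K₁ * Δ s t := h
      have hΔst : 0 < Δ s t := by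
        by_contra hc; push_neg at hc; nlinarith
      exact (hΔpos s t hΔst).2.2
    · -- hrow
      intro s
      rw [← Finset.mul_sum]
      exact ((hΔw s).1).symm
    · -- hcol
      intro t
      rw [← Finset.mul_sum]
      have h2 := (hΔw t).2
      field_simp
      nlinarith [h2]
    · -- saturation at source
      intro u hu hn
      simp only [od1, od4, sub_zero]
      rw [hδ₁one u hu hn, mul_one]
    · -- saturation at sink
      intro u hu hn
      simp only [od3, od6, sub_zero]
      rw [hδ₂one u hu hn, mul_one]
  · rintro ⟨γ, hγ0, hγle, f, ⟨hcap, hskew, hcons⟩, hsat1, hsat2⟩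
    have hcap0 : ∀ v w, cap (emb Q s₁) (fun u => γ * emb Q s₂ u) R w v = 0 → 0 ≤ f v w := by
      intro v w h
      have h2 := hcap w v
      rw [h, nonpos_iff_eq_zero, ENNReal.ofReal_eq_zero] at h2
      rw [hskew v w]; linarith
    have hsrc_nn : ∀ u, 0 ≤ f src (lft u) := fun u => hcap0 _ _ rfl
    have hlr_nn : ∀ u v, 0 ≤ f (lft u) (rgt v) := fun u v => hcap0 _ _ rfl
    have hsnk_nn : ∀ v, 0 ≤ f (rgt v) snk := fun v => hcap0 _ _ rfl
    have hsrc_le : ∀ u, f src (lft u) ≤ emb Q s₁ u := by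
      intro u
      have h := hcap src (lft u)
      simp only [cp1] at h
      exact (ENNReal.ofReal_le_ofReal_iff (emb_nonneg Q hQ0 s₁ u)).mp h
    have hsnk_le : ∀ v, f (rgt v) snk ≤ γ * emb Q s₂ v := by
      intro v
      have h := hcap (rgt v) snk
      simp only [cp3] at h
      exact (ENNReal.ofReal_le_ofReal_iff (mul_nonneg hγ0.le (emb_nonneg Q hQ0 s₂ v))).mp h
    have hRmem : ∀ u v, 0 < f (lft u) (rgt v) → (u, v) ∈ R := by
      intro u v hpos
      by_contra hn
      have h := hcap (lft u) (rgt v)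
      rw [cp2, if_neg hn, nonpos_iff_eq_zero, ENNReal.ofReal_eq_zero] at h
      linarith
    have hzero : ∀ v w, cap (emb Q s₁) (fun u => γ * emb Q s₂ u) R v w = 0 →
        cap (emb Q s₁) (fun u => γ * emb Q s₂ u) R w v = 0 → f v w = 0 := by
      intro v w h1 h2
      have ha := hcap0 v w h2
      have hb := hcap v w
      rw [h1, nonpos_iff_eq_zero, ENNReal.ofReal_eq_zero] at hb
      linarith
    have hA : ∀ u, f src (lft u) = ∑ v, f (lft u) (rgt v) := by
      intro u
      have h := hcons (lft u) (by simp [lft, src]) (by simp [lft, snk])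
      rw [sum_vert (fun w => f w (lft u))] at h
      have z1 : (∑ s, f (lft s) (lft u)) = 0 :=
        Finset.sum_eq_zero fun s _ => hzero _ _ rfl rfl
      have z2 : f snk (lft u) = 0 := hzero _ _ rfl rfl
      have z3 : (∑ t, f (rgt t) (lft u)) = - ∑ t, f (lft u) (rgt t) := by
        rw [← Finset.sum_neg_distrib]
        exact Finset.sum_congr rfl fun t _ => hskew _ _
      rw [z1, z2, z3] at h
      linarith
    have hB : ∀ v, f (rgt v) snk = ∑ u, f (lft u) (rgt v) := by
      intro v
      have h := hcons (rgt v) (by simp [rgt, src]) (by simp [rgt, snk])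
      rw [sum_vert (fun w => f w (rgt v))] at h
      have z1 : (∑ t, f (rgt t) (rgt v)) = 0 :=
        Finset.sum_eq_zero fun t _ => hzero _ _ rfl rfl
      have z2 : f src (rgt v) = 0 := hzero _ _ rfl rfl
      have z3 : f snk (rgt v) = - f (rgt v) snk := hskew _ _
      rw [z1, z2, z3] at h
      linarith
    set δ₁ : S → ℝ := fun u => if emb Q s₁ u = 0 then 1 else f src (lft u) / emb Q s₁ u with hδ₁
    set δ₂ : S → ℝ := fun v => if emb Q s₂ v = 0 then 1 else f (rgt v) snk / (γ * emb Q s₂ v)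
      with hδ₂
    have hδ₁val : ∀ u, δ₁ u * emb Q s₁ u = f src (lft u) := by
      intro u
      by_cases h : emb Q s₁ u = 0
      · have hf : f src (lft u) = 0 := by
          have := hsrc_le u; have := hsrc_nn u; rw [h] at *; linarith
        simp [hδ₁, h, hf]
      · simp only [hδ₁, if_neg h]
        exact div_mul_cancel₀ _ h
    have hδ₂val : ∀ v, γ * (δ₂ v * emb Q s₂ v) = f (rgt v) snk := by
      intro v
      by_cases h : emb Q s₂ v = 0
      · have hf : f (rgt v) snk = 0 := by
          have h1 := hsnk_le v; have h2 := hsnk_nn v; rw [h, mul_zero] at h1; linarith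
        simp [hδ₂, h, hf]
      · simp only [hδ₂, if_neg h]
        have hne : γ * emb Q s₂ v ≠ 0 := mul_ne_zero (ne_of_gt hγ0) h
        field_simp
    have hK₁eq : (∑ u, δ₁ u * emb Q s₁ u) = ∑ u, f src (lft u) :=
      Finset.sum_congr rfl fun u _ => hδ₁val u
    have hval : (∑ u, f src (lft u)) = ∑ v, f (rgt v) snk := by
      calc (∑ u, f src (lft u)) = ∑ u, ∑ v, f (lft u) (rgt v) :=
            Finset.sum_congr rfl fun u _ => hA u
        _ = ∑ v, ∑ u, f (lft u) (rgt v) := Finset.sum_comm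
        _ = ∑ v, f (rgt v) snk := (Finset.sum_congr rfl fun v _ => (hB v).symm)
    have hK₂eq : γ * (∑ v, δ₂ v * emb Q s₂ v) = ∑ v, f (rgt v) snk := by
      rw [Finset.mul_sum]
      exact Finset.sum_congr rfl fun v _ => hδ₂val v
    have hK₁K₂ : (∑ u, δ₁ u * emb Q s₁ u) = γ * (∑ v, δ₂ v * emb Q s₂ v) := by
      rw [hK₁eq, hval, hK₂eq]
    have hK₁pos : 0 < ∑ u, δ₁ u * emb Q s₁ u := by
      rw [hK₁eq]
      have h1 : f src (lft u₀) = emb Q s₁ u₀ := hsat1 u₀ hu₀Q hu₀R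
      have h2 : 0 < emb Q s₁ u₀ := (emb_pos_iff Q hQ0 s₁ u₀).mpr hu₀Q
      calc (0:ℝ) < f src (lft u₀) := h1 ▸ h2
        _ ≤ ∑ u, f src (lft u) :=
            Finset.single_le_sum (fun i _ => hsrc_nn i) (mem_univ u₀)
    have hK₂pos : 0 < ∑ v, δ₂ v * emb Q s₂ v := by
      by_contra hc
      push_neg at hc
      nlinarith
    refine ⟨hL, δ₁, δ₂, ?_, ?_, ?_, ?_,
      ⟨fun u v => f (lft u) (rgt v) / (∑ u, δ₁ u * emb Q s₁ u), ?_, ?_, ?_⟩, ?_⟩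
    · intro u
      by_cases h : emb Q s₁ u = 0
      · simp [hδ₁, h]
      · have hpos : 0 < emb Q s₁ u :=
          lt_of_le_of_ne (emb_nonneg Q hQ0 s₁ u) (Ne.symm h)
        simp only [hδ₁, if_neg h]
        exact ⟨div_nonneg (hsrc_nn u) hpos.le, (div_le_one hpos).mpr (hsrc_le u)⟩
    · intro v
      by_cases h : emb Q s₂ v = 0
      · simp [hδ₂, h]
      · have hpos : 0 < γ * emb Q s₂ v :=
          mul_pos hγ0 (lt_of_le_of_ne (emb_nonneg Q hQ0 s₂ v) (Ne.symm h))
        simp only [hδ₂, if_neg h]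
        exact ⟨div_nonneg (hsnk_nn v) hpos.le, (div_le_one hpos).mpr (hsnk_le v)⟩
    · intro v hv hlt
      by_contra hn
      have hQv : 0 < Q s₁ v := (emb_pos_iff Q hQ0 s₁ v).mp hv
      have hs := hsat1 v hQv hn
      have : δ₁ v = 1 := by
        simp only [hδ₁, if_neg (ne_of_gt hv), hs]
        exact div_self (ne_of_gt hv)
      rw [this] at hlt
      exact lt_irrefl 1 hlt
    · intro v hv hlt
      by_contra hn
      have hQv : 0 < Q s₂ v := (emb_pos_iff Q hQ0 s₂ v).mp hv
      have hs := hsat2 v hQv hn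
      have : δ₂ v = 1 := by
        simp only [hδ₂, if_neg (ne_of_gt hv), hs]
        exact div_self (ne_of_gt (mul_pos hγ0 hv))
      rw [this] at hlt
      exact lt_irrefl 1 hlt
    · intro u v
      constructor
      · exact div_nonneg (hlr_nn u v) hK₁pos.le
      · rw [div_le_one hK₁pos]
        calc f (lft u) (rgt v) ≤ ∑ t, f (lft u) (rgt t) :=
              Finset.single_le_sum (fun i _ => hlr_nn u i) (mem_univ v)
          _ = f src (lft u) := (hA u).symm
          _ ≤ ∑ u, f src (lft u) :=
              Finset.single_le_sum (fun i _ => hsrc_nn i) (mem_univ u)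
          _ = ∑ u, δ₁ u * emb Q s₁ u := hK₁eq.symm
    · intro u v h
      have hf : 0 < f (lft u) (rgt v) := by
        have := mul_pos h hK₁pos
        rwa [div_mul_cancel₀ _ (ne_of_gt hK₁pos)] at this
      have hfu : 0 < f src (lft u) := by
        rw [hA u]
        calc (0:ℝ) < f (lft u) (rgt v) := hf
          _ ≤ ∑ t, f (lft u) (rgt t) :=
              Finset.single_le_sum (fun i _ => hlr_nn u i) (mem_univ v)
      have hfv : 0 < f (rgt v) snk := by
        rw [hB v]
        calc (0:ℝ) < f (lft u) (rgt v) := hf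
          _ ≤ ∑ s, f (lft s) (rgt v) :=
              Finset.single_le_sum (fun i _ => hlr_nn i v) (mem_univ u)
      have he₁ : 0 < emb Q s₁ u := lt_of_lt_of_le hfu (hsrc_le u)
      have he₂ : 0 < emb Q s₂ v := by
        have := lt_of_lt_of_le hfv (hsnk_le v)
        nlinarith
      refine ⟨⟨he₁, ?_⟩, ⟨he₂, ?_⟩, hRmem u v hf⟩
      · simp only [hδ₁, if_neg (ne_of_gt he₁)]
        exact div_pos hfu he₁
      · simp only [hδ₂, if_neg (ne_of_gt he₂)]
        exact div_pos hfv (mul_pos hγ0 he₂)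
    · intro _ _ w
      constructor
      · rw [← Finset.sum_div, ← hA w, mul_div_cancel₀ _ (ne_of_gt hK₁pos), mul_comm]
        exact (hδ₁val w).symm
      · rw [← Finset.sum_div, ← hB w, hK₁K₂]
        have h2 := hδ₂val w
        have hne : (∑ v, δ₂ v * emb Q s₂ v) ≠ 0 := ne_of_gt hK₂pos
        field_simp
        nlinarith [h2]
    · have hgE : γ * (∑ v, Q s₁ v) ≤ ∑ v, Q s₂ v := (le_div_iff₀ hE₁).mp hγle
      have h := mul_nonneg hK₂pos.le
        (sub_nonneg.mpr hgE)
      rw [hK₁K₂]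
      nlinarith [h]
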